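/- For a totally real number field F of degree d ≥ 2, a congruence subgroup Γ of SL₂(F), and an integral dominant parameter λ ∈ ℤ^d_{≥1}, the generalized χ_λ-eigenspace N(Γ, χ_λ)^gen of nearly holomorphic automorphic forms equals the honest χ_λ-eigenspace N(Γ, χ_λ): the center Z(U(𝔤)) acts semisimply on the space of nearly holomorphic automorphic forms. This follows because every nearly holomorphic form on Γ\SL₂(ℝ)^d (with d ≥ 2) generates a highest weight (𝔤, K_∞)-module, and every highest weight module has a genuine (not merely generalized) infinitesimal character. -/

import Mathlib

open Module LinearMap

section Aux

variable {A : Type*} [Ring A] [Algebra ℂ A]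

/-- The Casimir element commutes with `E`, `F`, `H` of an `sl₂`-triple (paper's sign
normalization). -/
lemma casimir_comm (E F H : A)
    (hEF : E * F = F * E - H)
    (hHE : H * E = E * H - (2 : ℂ) • E)
    (hHF : H * F = F * H + (2 : ℂ) • F) :
    ((E * F + F * E + (1 / 2 : ℂ) • (H * H)) * E
      = E * (E * F + F * E + (1 / 2 : ℂ) • (H * H))) ∧
    ((E * F + F * E + (1 / 2 : ℂ) • (H * H)) * F
      = F * (E * F + F * E + (1 / 2 : ℂ) • (H * H))) ∧
    ((E * F + F * E + (1 / 2 : ℂ) • (H * H)) * H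
      = H * (E * F + F * E + (1 / 2 : ℂ) • (H * H))) := by
  have hEF' : ∀ x : A, E * (F * x) = F * (E * x) - H * x := by
    intro x; rw [← mul_assoc, hEF, sub_mul, mul_assoc]
  have hHE' : ∀ x : A, H * (E * x) = E * (H * x) - (2 : ℂ) • (E * x) := by
    intro x; rw [← mul_assoc, hHE, sub_mul, mul_assoc, smul_mul_assoc]
  have hHF' : ∀ x : A, H * (F * x) = F * (H * x) + (2 : ℂ) • (F * x) := by
    intro x; rw [← mul_assoc, hHF, add_mul, mul_assoc, smul_mul_assoc]
  refine ⟨?_, ?_, ?_⟩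
  · simp only [add_mul, mul_add, smul_mul_assoc, mul_smul_comm, mul_assoc,
      hEF, hHE, hEF', hHE', hHF', hHF, mul_sub, sub_mul, mul_add, add_mul,
      smul_sub, smul_add, mul_smul_comm, smul_mul_assoc]
    module
  · simp only [add_mul, mul_add, smul_mul_assoc, mul_smul_comm, mul_assoc,
      hEF, hHE, hEF', hHE', hHF', hHF, mul_sub, sub_mul, mul_add, add_mul,
      smul_sub, smul_add, mul_smul_comm, smul_mul_assoc]
    module
  · simp only [add_mul, mul_add, smul_mul_assoc, mul_smul_comm, mul_assoc,
      hEF, hHE, hEF', hHE', hHF', hHF, mul_sub, sub_mul, mul_add, add_mul,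
      smul_sub, smul_add, mul_smul_comm, smul_mul_assoc]
    module

end Aux

section Aux2

variable {V : Type*} [AddCommGroup V] [Module ℂ V]

/-- Eigenvectors for pairwise distinct eigenvalues summing to zero are all zero. -/
lemma eigenvectors_sum_zero (C : Module.End ℂ V) (s : Finset ℂ) :
    ∀ x : ℂ → V, (∀ μ ∈ s, C (x μ) = μ • x μ) → (∑ μ ∈ s, x μ) = 0 →
      ∀ μ ∈ s, x μ = 0 := by
  classical
  induction s using Finset.induction_on with
  | empty => intro x _ _ μ hμ; exact absurd hμ (Finset.notMem_empty μ)
  | @insert ν t hν ih =>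
      intro x hx hsum
      have hsum' : x ν + ∑ μ ∈ t, x μ = 0 := by rwa [Finset.sum_insert hν] at hsum
      -- apply (C - ν) to the relation
      have hts : (∑ μ ∈ t, x μ) = -(x ν) := by
        rw [eq_neg_iff_add_eq_zero, add_comm]; exact hsum'
      have key : (∑ μ ∈ t, (μ - ν) • x μ) = 0 := by
        calc ∑ μ ∈ t, (μ - ν) • x μ
            = ∑ μ ∈ t, (C (x μ) - ν • x μ) := Finset.sum_congr rfl (fun μ hμ => by
              rw [hx μ (Finset.mem_insert_of_mem hμ), sub_smul])
          _ = C (∑ μ ∈ t, x μ) - ν • (∑ μ ∈ t, x μ) := by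
              rw [map_sum, Finset.smul_sum, Finset.sum_sub_distrib]
          _ = 0 := by
              rw [hts, map_neg, hx ν (Finset.mem_insert_self ν t)]
              simp
      have hzt : ∀ μ ∈ t, x μ = 0 := by
        intro μ hμ
        have := ih (fun μ => (μ - ν) • x μ)
          (fun μ hμ => by rw [map_smul, hx μ (Finset.mem_insert_of_mem hμ), smul_comm]) key μ hμ
        have hne : μ - ν ≠ 0 := sub_ne_zero.mpr (by rintro rfl; exact hν hμ)
        exact (smul_eq_zero.mp this).resolve_left hne
      have hxν : x ν = 0 := by
        have : ∑ μ ∈ t, x μ = 0 := Finset.sum_eq_zero hzt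
        rwa [this, add_zero] at hsum'
      intro μ hμ
      rcases Finset.mem_insert.mp hμ with rfl | hμ
      · exact hxν
      · exact hzt μ hμ

lemma pow_apply_eigenvector (C : Module.End ℂ V) (c μ : ℂ) (y : V)
    (hy : C y = μ • y) (n : ℕ) :
    ((C - c • (1 : Module.End ℂ V)) ^ n) y = ((μ - c) ^ n) • y := by
  induction n with
  | zero => simp
  | succ n ih =>
      have h1 : (C - c • (1 : Module.End ℂ V)) y = (μ - c) • y := by
        simp [LinearMap.sub_apply, LinearMap.smul_apply, hy, sub_smul]
      rw [pow_succ', Module.End.mul_apply, ih, map_smul, h1, smul_smul, pow_succ']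
      ring_nf

end Aux2

theorem center_acts_semisimply_on_nearly_holomorphic
    {V : Type*} [AddCommGroup V] [Module ℂ V] (d : ℕ)
    (e f h : Fin d → (V →ₗ[ℂ] V))
    (hrel1 : ∀ i, h i ∘ₗ f i - f i ∘ₗ h i = (2 : ℂ) • f i)
    (hrel2 : ∀ i, h i ∘ₗ e i - e i ∘ₗ h i = (-2 : ℂ) • e i)
    (hrel3 : ∀ i, e i ∘ₗ f i - f i ∘ₗ e i = -(h i))
    (hcomm : ∀ i j, i ≠ j →
      e i ∘ₗ e j = e j ∘ₗ e i ∧ e i ∘ₗ f j = f j ∘ₗ e i ∧ e i ∘ₗ h j = h j ∘ₗ e i ∧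
      f i ∘ₗ f j = f j ∘ₗ f i ∧ f i ∘ₗ h j = h j ∘ₗ f i ∧ h i ∘ₗ h j = h j ∘ₗ h i)
    (hhw : ∀ v : V, ∃ (n : ℕ) (w : Fin n → V),
      (∀ t, ∃ μ : Fin d → ℂ, (∀ i, e i (w t) = 0) ∧ ∀ i, h i (w t) = μ i • w t) ∧
      ∀ p : Submodule ℂ V,
        (∀ i, p.map (e i) ≤ p ∧ p.map (f i) ≤ p ∧ p.map (h i) ≤ p) →
        (∀ t, w t ∈ p) → v ∈ p)
    (c : Fin d → ℂ) (v : V)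
    (hgen : ∀ i, ∃ n : ℕ,
      (((e i ∘ₗ f i + f i ∘ₗ e i + (1 / 2 : ℂ) • (h i ∘ₗ h i)) -
        c i • (1 : V →ₗ[ℂ] V)) ^ n) v = 0) :
    ∀ i, (e i ∘ₗ f i + f i ∘ₗ e i + (1 / 2 : ℂ) • (h i ∘ₗ h i)) v = c i • v := by
  classical
  intro i
  set E : Module.End ℂ V := e i with hE
  set F : Module.End ℂ V := f i with hF
  set H : Module.End ℂ V := h i with hH
  set C : Module.End ℂ V := E * F + F * E + (1 / 2 : ℂ) • (H * H) with hC
  -- basic relations in the endomorphism ring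
  have hEF : E * F = F * E - H := by
    have h3 := hrel3 i
    simp only [← Module.End.mul_eq_comp] at h3
    have := sub_eq_iff_eq_add.mp h3
    rw [this, neg_add_eq_sub]
  have hHE : H * E = E * H - (2 : ℂ) • E := by
    have h2 := hrel2 i
    simp only [← Module.End.mul_eq_comp] at h2
    have := sub_eq_iff_eq_add.mp h2
    rw [this, neg_smul, neg_add_eq_sub]
  have hHF : H * F = F * H + (2 : ℂ) • F := by
    have h1 := hrel1 i
    simp only [← Module.End.mul_eq_comp] at h1
    have := sub_eq_iff_eq_add.mp h1
    rw [this, add_comm]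
  obtain ⟨hCE, hCF, hCH⟩ := casimir_comm E F H hEF hHE hHF
  -- commutation of C with all generators
  have hCcomm : ∀ j, C * e j = e j * C ∧ C * f j = f j * C ∧ C * h j = h j * C := by
    intro j
    by_cases hij : j = i
    · subst hij; exact ⟨hCE, hCF, hCH⟩
    · have h1 := hcomm i j (fun hh => hij hh.symm)
      have h2 := hcomm j i hij
      simp only [← Module.End.mul_eq_comp] at h1 h2
      obtain ⟨hee, hef, heh, hff, hfh, hhh⟩ := h1
      obtain ⟨hee', hef', heh', hff', hfh', hhh'⟩ := h2
      -- E * e j = e j * E etc.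
      have cE : E * e j = e j * E := hee
      have cF : F * e j = e j * F := hef'.symm
      have cH : H * e j = e j * H := heh'.symm
      have cE2 : E * f j = f j * E := hef
      have cF2 : F * f j = f j * F := hff
      have cH2 : H * f j = f j * H := hfh'.symm
      have cE3 : E * h j = h j * E := heh
      have cF3 : F * h j = h j * F := hfh
      have cH3 : H * h j = h j * H := hhh
      refine ⟨?_, ?_, ?_⟩ <;>
        (rw [hC]; simp only [add_mul, mul_add, smul_mul_assoc, mul_smul_comm]) 
      · rw [mul_assoc, cF, ← mul_assoc, cE, mul_assoc,
          mul_assoc, cE, ← mul_assoc F, cF, mul_assoc,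
          mul_assoc, cH, ← mul_assoc H, cH, mul_assoc]
      · rw [mul_assoc, cF2, ← mul_assoc E, cE2, mul_assoc,
          mul_assoc, cE2, ← mul_assoc F, cF2, mul_assoc,
          mul_assoc, cH2, ← mul_assoc H, cH2, mul_assoc]
      · rw [mul_assoc, cF3, ← mul_assoc E, cE3, mul_assoc,
          mul_assoc, cE3, ← mul_assoc F, cF3, mul_assoc,
          mul_assoc, cH3, ← mul_assoc H, cH3, mul_assoc]
  -- the supremum of eigenspaces of C
  set W : Submodule ℂ V := ⨆ μ : ℂ, C.eigenspace μ with hW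
  have hWinv : ∀ (G : Module.End ℂ V), C * G = G * C → W.map G ≤ W := by
    intro G hG
    rw [hW, Submodule.map_iSup]
    refine iSup_mono fun μ => ?_
    intro x hx
    obtain ⟨y, hy, rfl⟩ := Submodule.mem_map.mp hx
    have hy' : C y = μ • y := Module.End.mem_eigenspace_iff.mp hy
    refine Module.End.mem_eigenspace_iff.mpr ?_
    have hgc : C (G y) = G (C y) := by
      have := congrArg (fun T : Module.End ℂ V => T y) hG
      simpa [Module.End.mul_apply] using this
    rw [hgc, hy', map_smul]
  have hvW : v ∈ W := by
    obtain ⟨n, w, hw, hgenby⟩ := hhw v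
    refine hgenby W (fun j => ⟨hWinv _ (hCcomm j).1, hWinv _ (hCcomm j).2.1,
      hWinv _ (hCcomm j).2.2⟩) (fun t => ?_)
    obtain ⟨μ, hze, hhw'⟩ := hw t
    have hwt : C (w t) = ((1 / 2 : ℂ) * μ i ^ 2 - μ i) • w t := by
      have hEw : E (w t) = 0 := hze i
      have hHw : H (w t) = μ i • w t := hhw' i
      have hEFw : (E * F) (w t) = -(μ i) • w t := by
        rw [hEF]
        simp [Module.End.mul_apply, hEw, hHw, LinearMap.sub_apply, map_zero]
      have : C (w t) = (E * F) (w t) + (F * E) (w t)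
          + (1 / 2 : ℂ) • ((H * H) (w t)) := by
        rw [hC]; simp [LinearMap.add_apply, LinearMap.smul_apply]
      rw [this, hEFw]
      simp only [Module.End.mul_apply, hEw, map_zero, hHw, map_smul, smul_smul]
      rw [add_zero]
      rw [← add_smul]
      ring_nf
    exact Submodule.mem_iSup_of_mem ((1 / 2 : ℂ) * μ i ^ 2 - μ i)
      (Module.End.mem_eigenspace_iff.mpr hwt)
  -- decompose v as a sum of eigenvectors
  obtain ⟨g, hg, hsum⟩ := (Submodule.mem_iSup_iff_exists_finsupp _ _).mp hvW
  have hgeig : ∀ μ, C (g μ) = μ • g μ := fun μ =>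
    Module.End.mem_eigenspace_iff.mp (hg μ)
  obtain ⟨n, hn⟩ := hgen i
  have hCv_goal : C v = c i • v → (e i ∘ₗ f i + f i ∘ₗ e i
      + (1 / 2 : ℂ) • (h i ∘ₗ h i)) v = c i • v := by
    intro hcv
    have : (e i ∘ₗ f i + f i ∘ₗ e i + (1 / 2 : ℂ) • (h i ∘ₗ h i)) = C := by
      rw [hC, hE, hF, hH]; simp [Module.End.mul_eq_comp]
    rw [this]; exact hcv
  apply hCv_goal
  rcases Nat.eq_zero_or_pos n with rfl | hnpos
  · -- n = 0 forces v = 0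
    have : v = 0 := by simpa using hn
    simp [this]
  · -- the generalized eigenvector equation in terms of the decomposition
    have hCn : C = (e i ∘ₗ f i + f i ∘ₗ e i + (1 / 2 : ℂ) • (h i ∘ₗ h i)) := by
      rw [hC, hE, hF, hH]; simp [Module.End.mul_eq_comp]
    rw [← hCn] at hn
    have hvsum : v = ∑ μ ∈ g.support, g μ := by
      rw [← hsum]; rfl
    have hzero : (∑ μ ∈ g.support, ((μ - c i) ^ n) • g μ) = 0 := by
      have : ((C - c i • (1 : Module.End ℂ V)) ^ n) v = 0 := hn
      rw [hvsum, map_sum] at this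
      rw [← this]
      exact Finset.sum_congr rfl fun μ _ =>
        (pow_apply_eigenvector C (c i) μ (g μ) (hgeig μ) n).symm
    have hall : ∀ μ ∈ g.support, ((μ - c i) ^ n) • g μ = 0 :=
      eigenvectors_sum_zero C g.support (fun μ => ((μ - c i) ^ n) • g μ)
        (fun μ _ => by rw [map_smul, hgeig μ, smul_comm]) hzero
    have hgz : ∀ μ ∈ g.support, μ ≠ c i → g μ = 0 := by
      intro μ hμ hne
      have hpne : ((μ - c i) ^ n) ≠ 0 := pow_ne_zero n (sub_ne_zero.mpr hne)
      exact (smul_eq_zero.mp (hall μ hμ)).resolve_left hpne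
    rw [hvsum, map_sum, Finset.smul_sum]
    refine Finset.sum_congr rfl fun μ hμ => ?_
    rcases eq_or_ne μ (c i) with rfl | hne
    · exact hgeig _
    · rw [hgz μ hμ hne]; simp
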